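/- Let n ∈ ℕ and let c be a real number with Ostrowski representation Σ_{k=0}^∞ b_{k+1}β_k. If −β_n < c < −(β_n + β_{n+1}) or −(β_n + β_{n+1}) < c < −β_n, then b_{k+1} = 0 for all k ≤ n. -/

import Mathlib

open Filter Finset Topology

theorem small_ostrowski_digits (a : ℝ) (ha : Irrational a)
    (aCF : ℕ → ℤ) (ζ : ℕ → ℝ)
    (hζ0 : ζ 0 = a)
    (hfloor : ∀ k, aCF k = ⌊ζ k⌋)
    (hζ : ∀ k, ζ k = (aCF k : ℝ) + 1 / ζ (k + 1))
    (p q : ℕ → ℤ)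
    (hq0 : q 0 = 1) (hq1 : q 1 = aCF 1)
    (hqrec : ∀ k, q (k + 2) = aCF (k + 2) * q (k + 1) + q k)
    (hp0 : p 0 = aCF 0) (hp1 : p 1 = aCF 1 * aCF 0 + 1)
    (hprec : ∀ k, p (k + 2) = aCF (k + 2) * p (k + 1) + p k)
    (β : ℕ → ℝ)
    (hβ : ∀ k, β k = (q k : ℝ) * a - (p k : ℝ)) (h1 : 3 / 2 < a) (h2 : a < 2)
    (n : ℕ) (c : ℝ)
    (b : ℕ → ℕ)
    (hb0 : b 0 = 0)
    (hb1 : (b 1 : ℤ) < aCF 1)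
    (hble : ∀ k ≥ 1, (b k : ℤ) ≤ aCF k)
    (hbcons : ∀ k ≥ 1, (b (k + 1) : ℤ) = aCF (k + 1) → b k = 0)
    (hbinf : ∀ m, ∃ k ≥ m, Odd k ∧ (b k : ℤ) < aCF k)
    (hbsum : Summable (fun k : ℕ => (b (k + 1) : ℝ) * β k))
    (hcrep : c = ∑' k : ℕ, (b (k + 1) : ℝ) * β k)
    (hc : (-β n < c ∧ c < -(β n + β (n + 1))) ∨ (-(β n + β (n + 1)) < c ∧ c < -β n)) :
    ∀ k ≤ n, b (k + 1) = 0 := by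
  classical
  -- basic facts about ζ
  have hζirr : ∀ k, Irrational (ζ k) := by
    intro k
    induction k with
    | zero => rwa [hζ0]
    | succ k ih =>
      have e : (1:ℝ) / ζ (k + 1) = ζ k - (aCF k : ℝ) := by
        have := hζ k; linarith
      have h1' : Irrational (1 / ζ (k + 1)) := by
        rw [e]; exact ih.sub_intCast _
      have e2 : ζ (k + 1) = (1 / ζ (k + 1))⁻¹ := by
        rw [one_div, inv_inv]
      rw [e2]; exact h1'.inv
  have hfr : ∀ k, (1:ℝ) / ζ (k + 1) = Int.fract (ζ k) := by
    intro k
    rw [← Int.self_sub_floor, ← hfloor k]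
    have := hζ k; linarith
  have hfrpos : ∀ k, 0 < Int.fract (ζ k) := by
    intro k
    rcases (Int.fract_nonneg (ζ k)).lt_or_eq with h | h
    · exact h
    · exfalso
      have h2' : ζ k - (⌊ζ k⌋ : ℝ) = Int.fract (ζ k) := Int.self_sub_floor _
      exact (hζirr k).ne_int ⌊ζ k⌋ (by linarith)
  have hζgt : ∀ k, 1 < ζ (k + 1) := by
    intro k
    have h0 : 0 < 1 / ζ (k + 1) := by rw [hfr k]; exact hfrpos k
    have hpos : 0 < ζ (k + 1) := one_div_pos.mp h0
    have hlt : 1 / ζ (k + 1) < 1 := by rw [hfr k]; exact Int.fract_lt_one _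
    rw [div_lt_one hpos] at hlt; exact hlt
  have hζpos : ∀ k, 0 < ζ (k + 1) := fun k => lt_trans one_pos (hζgt k)
  have haCF : ∀ k, 1 ≤ (aCF (k + 1) : ℝ) := by
    intro k
    have : (1:ℤ) ≤ aCF (k + 1) := by
      rw [hfloor]
      exact Int.le_floor.mpr (by exact_mod_cast (hζgt k).le)
    exact_mod_cast this
  -- recurrence for β
  have hβrec : ∀ k, β (k + 2) = (aCF (k + 2) : ℝ) * β (k + 1) + β k := by
    intro k
    rw [hβ, hβ, hβ, hqrec k, hprec k]
    push_cast
    ring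
  -- key identity
  have hkey : ∀ k, β (k + 1) = -β k / ζ (k + 2) := by
    intro k
    induction k with
    | zero =>
      have hz2 : ζ 2 ≠ 0 := (hζpos 1).ne'
      have e0 : a = (aCF 0 : ℝ) + 1 / ζ 1 := by rw [← hζ0]; exact hζ 0
      have F0 : ζ 1 * (a - (aCF 0 : ℝ)) = 1 := by
        have hz1 : ζ 1 ≠ 0 := (hζpos 0).ne'
        have : a - (aCF 0 : ℝ) = 1 / ζ 1 := by linarith
        rw [this]; field_simp
      have F1 : ζ 2 * (ζ 1 - (aCF 1 : ℝ)) = 1 := by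
        have e1 : ζ 1 = (aCF 1 : ℝ) + 1 / ζ 2 := hζ 1
        have : ζ 1 - (aCF 1 : ℝ) = 1 / ζ 2 := by linarith
        rw [this]; field_simp
      rw [hβ, hβ, hq1, hp1, hq0, hp0]
      push_cast
      rw [eq_div_iff hz2]
      linear_combination (ζ 2) * F0 - (a - (aCF 0 : ℝ)) * F1
    | succ k ih =>
      have hz : ζ (k + 2) ≠ 0 := (hζpos (k + 1)).ne'
      have hz3 : ζ (k + 3) ≠ 0 := (hζpos (k + 2)).ne'
      have hbk : β k = -β (k + 1) * ζ (k + 2) := by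
        rw [ih]; field_simp
      have E : ζ (k + 2) * ζ (k + 3) = (aCF (k + 2) : ℝ) * ζ (k + 3) + 1 := by
        have e : ζ (k + 2) = (aCF (k + 2) : ℝ) + 1 / ζ (k + 3) := hζ (k + 2)
        rw [e]; field_simp
      rw [hβrec k, hbk, eq_div_iff hz3]
      linear_combination (-β (k + 1)) * E
  -- signs
  have hsign : ∀ k, (Even k → 0 < β k) ∧ (Odd k → β k < 0) := by
    intro k
    induction k with
    | zero =>
      constructor
      · intro _
        have e : β 0 = 1 / ζ 1 := by
          have h' := hζ 0
          rw [hζ0] at h'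
          rw [hβ, hq0, hp0]
          push_cast
          linarith
        rw [e]
        exact div_pos one_pos (hζpos 0)
      · intro h; exact absurd h (by simp)
    | succ k ih =>
      constructor
      · intro he
        have hk : Odd k := Nat.not_even_iff_odd.mp (Nat.even_add_one.mp he)
        have hneg := ih.2 hk
        rw [hkey k]
        have : 0 < -β k := by linarith
        exact div_pos this (hζpos (k + 1))
      · intro ho
        have hk : Even k := Nat.not_odd_iff_even.mp (Nat.odd_add_one.mp ho)
        have hb := ih.1 hk
        rw [hkey k, neg_div]
        have : 0 < β k / ζ (k + 2) := div_pos hb (hζpos (k + 1))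
        linarith
  have hβne : ∀ k, β k ≠ 0 := by
    intro k
    rcases Nat.even_or_odd k with h | h
    · exact ((hsign k).1 h).ne'
    · exact ((hsign k).2 h).ne
  -- absolute values
  set B : ℕ → ℝ := fun k => |β k| with hBdef
  have hBpos : ∀ k, 0 < B k := fun k => abs_pos.mpr (hβne k)
  have hBeq : ∀ k, B (k + 1) = B k / ζ (k + 2) := by
    intro k
    simp only [hBdef, hkey k, abs_div, abs_neg, abs_of_pos (hζpos (k + 1))]
  have hBlt : ∀ k, B (k + 1) < B k := by
    intro k
    rw [hBeq k]
    exact div_lt_self (hBpos k) (hζgt (k + 1))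
  have hBanti : Antitone B := antitone_nat_of_succ_le fun k => (hBlt k).le
  have hBhalf : ∀ k, B (k + 2) ≤ B k / 2 := by
    intro k
    have e2 : B (k + 2) = B (k + 1) / ζ (k + 3) := hBeq (k + 1)
    have hprod : 2 ≤ ζ (k + 2) * ζ (k + 3) := by
      have hz : ζ (k + 2) = (aCF (k + 2) : ℝ) + 1 / ζ (k + 3) := hζ (k + 2)
      have h3 : 1 < ζ (k + 3) := hζgt (k + 2)
      have haa : 1 ≤ (aCF (k + 2) : ℝ) := haCF (k + 1)
      have e : ((aCF (k + 2) : ℝ) + 1 / ζ (k + 3)) * ζ (k + 3)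
          = (aCF (k + 2) : ℝ) * ζ (k + 3) + 1 := by
        field_simp
      rw [hz, e]
      nlinarith
    rw [e2, hBeq k, div_div]
    rw [div_le_div_iff₀ (by nlinarith [hζpos (k + 1), hζpos (k + 2)]) (by norm_num)]
    nlinarith [hBpos k]
  have hBpow : ∀ m j, B (m + 2 * j) ≤ B m / 2 ^ j := by
    intro m j
    induction j with
    | zero => simp
    | succ j ih =>
      have e : m + 2 * (j + 1) = (m + 2 * j) + 2 := by ring
      rw [e]
      calc B ((m + 2 * j) + 2) ≤ B (m + 2 * j) / 2 := hBhalf _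
        _ ≤ (B m / 2 ^ j) / 2 := by linarith
        _ = B m / 2 ^ (j + 1) := by rw [div_div, ← pow_succ]
  have htend : ∀ m, Tendsto (fun N => β (2 * N + m)) atTop (𝓝 0) := by
    intro m
    apply squeeze_zero_norm (a := fun N => B m * (1 / 2) ^ N)
    · intro N
      have h' := hBpow m N
      rw [Nat.add_comm m (2 * N)] at h'
      calc ‖β (2 * N + m)‖ = B (2 * N + m) := rfl
        _ ≤ B m / 2 ^ N := h'
        _ = B m * (1 / 2) ^ N := by rw [div_pow, one_pow, div_eq_mul_one_div, mul_one_div]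
    · simpa using (tendsto_pow_atTop_nhds_zero_of_lt_one
        (by norm_num : (0:ℝ) ≤ 1 / 2) (by norm_num)).const_mul (B m)
  -- abbreviation
  set f : ℕ → ℝ := fun k => (b (k + 1) : ℝ) * β k with hfdef
  -- tail bounds
  have htail : ∀ m, (Even m → -β m ≤ ∑' k, f (k + m)) ∧ (Odd m → ∑' k, f (k + m) ≤ -β m) := by
    intro m
    have hsum : Summable fun k => f (k + m) := (summable_nat_add_iff m).2 hbsum
    have hlim : Tendsto (fun N => ∑ j ∈ range N, f (j + m)) atTop (𝓝 (∑' k, f (k + m))) :=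
      hsum.hasSum.tendsto_sum_nat
    have h2N : Tendsto (fun N : ℕ => 2 * N) atTop atTop :=
      tendsto_atTop_mono (fun n => by simp only [id]; omega) tendsto_id
    have hlim2 : Tendsto (fun N => ∑ j ∈ range (2 * N), f (j + m)) atTop
        (𝓝 (∑' k, f (k + m))) := hlim.comp h2N
    have hlimβ : Tendsto (fun N => β (2 * N + m) - β m) atTop (𝓝 (-β m)) := by
      have h' := (htend m).sub_const (β m)
      rw [zero_sub] at h'
      exact h'
    constructor
    · intro hm
      have hlow : ∀ N, β (2 * N + m) - β m ≤ ∑ j ∈ range (2 * N), f (j + m) := by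
        intro N
        induction N with
        | zero => simp
        | succ N ih =>
          have e : 2 * (N + 1) = (2 * N) + 1 + 1 := by ring
          rw [e, Finset.sum_range_succ, Finset.sum_range_succ]
          have h1' : 0 ≤ f (2 * N + m) := by
            have heven : Even (2 * N + m) := (even_two_mul N).add hm
            have hp' := (hsign (2 * N + m)).1 heven
            have hb : (0:ℝ) ≤ (b (2 * N + m + 1) : ℝ) := Nat.cast_nonneg _
            exact mul_nonneg hb hp'.le
          have h2' : β (2 * N + m + 2) - β (2 * N + m) ≤ f (2 * N + 1 + m) := by
            have hodd : Odd (2 * N + m + 1) := ((even_two_mul N).add hm).add_one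
            have hneg : β (2 * N + m + 1) < 0 := (hsign (2 * N + m + 1)).2 hodd
            have hbound : (b (2 * N + m + 2) : ℝ) ≤ (aCF (2 * N + m + 2) : ℝ) := by
              exact_mod_cast hble (2 * N + m + 2) (by omega)
            have hmul := mul_le_mul_of_nonpos_right hbound hneg.le
            have hr : β (2 * N + m + 2) = (aCF (2 * N + m + 2) : ℝ) * β (2 * N + m + 1)
                + β (2 * N + m) := hβrec (2 * N + m)
            have e2 : f (2 * N + 1 + m) = (b (2 * N + m + 2) : ℝ) * β (2 * N + m + 1) := by
              rw [show 2 * N + 1 + m = 2 * N + m + 1 from by omega]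
            rw [e2]
            linarith
          rw [show 2 * N + 1 + 1 + m = 2 * N + m + 2 from by omega]
          linarith
      exact le_of_tendsto_of_tendsto' hlimβ hlim2 hlow
    · intro hm
      have hhigh : ∀ N, ∑ j ∈ range (2 * N), f (j + m) ≤ β (2 * N + m) - β m := by
        intro N
        induction N with
        | zero => simp
        | succ N ih =>
          have e : 2 * (N + 1) = (2 * N) + 1 + 1 := by ring
          rw [e, Finset.sum_range_succ, Finset.sum_range_succ]
          have h1' : f (2 * N + m) ≤ 0 := by
            have hodd : Odd (2 * N + m) := (even_two_mul N).add_odd hm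
            have hn' := (hsign (2 * N + m)).2 hodd
            have hb : (0:ℝ) ≤ (b (2 * N + m + 1) : ℝ) := Nat.cast_nonneg _
            exact mul_nonpos_of_nonneg_of_nonpos hb hn'.le
          have h2' : f (2 * N + 1 + m) ≤ β (2 * N + m + 2) - β (2 * N + m) := by
            have heven : Even (2 * N + m + 1) := ((even_two_mul N).add_odd hm).add_one
            have hposβ : 0 < β (2 * N + m + 1) := (hsign (2 * N + m + 1)).1 heven
            have hbound : (b (2 * N + m + 2) : ℝ) ≤ (aCF (2 * N + m + 2) : ℝ) := by
              exact_mod_cast hble (2 * N + m + 2) (by omega)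
            have hmul := mul_le_mul_of_nonneg_right hbound hposβ.le
            have hr : β (2 * N + m + 2) = (aCF (2 * N + m + 2) : ℝ) * β (2 * N + m + 1)
                + β (2 * N + m) := hβrec (2 * N + m)
            have e2 : f (2 * N + 1 + m) = (b (2 * N + m + 2) : ℝ) * β (2 * N + m + 1) := by
              rw [show 2 * N + 1 + m = 2 * N + m + 1 from by omega]
            rw [e2]
            linarith
          rw [show 2 * N + 1 + 1 + m = 2 * N + m + 2 from by omega]
          linarith
      exact le_of_tendsto_of_tendsto' hlim2 hlimβ hhigh
  -- main argument
  by_contra hcon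
  push_neg at hcon
  have hex : ∃ k, k ≤ n ∧ b (k + 1) ≠ 0 := by
    obtain ⟨k, hk1, hk2⟩ := hcon
    exact ⟨k, hk1, hk2⟩
  set m := Nat.find hex with hmdef
  obtain ⟨hmn, hmne⟩ := Nat.find_spec hex
  have hmin : ∀ k < m, b (k + 1) = 0 := by
    intro k hk
    have h' := Nat.find_min hex hk
    push_neg at h'
    exact h' (le_trans (le_of_lt (lt_of_lt_of_le hk hmn)) le_rfl)
  -- decompose c
  have hdecomp : c = f m + f (m + 1) + ∑' k, f (k + (m + 2)) := by
    have hsplit := Summable.sum_add_tsum_nat_add (f := f) (m + 2) hbsum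
    have hsum0 : ∑ i ∈ range (m + 2), f i = f m + f (m + 1) := by
      rw [Finset.sum_range_succ, Finset.sum_range_succ]
      have hz : ∑ i ∈ range m, f i = 0 := by
        apply Finset.sum_eq_zero
        intro i hi
        have : f i = (b (i + 1) : ℝ) * β i := rfl
        rw [this, hmin i (Finset.mem_range.mp hi)]
        simp
      rw [hz]; ring
    rw [hcrep, ← hsplit, hsum0]
  -- digit bounds at m
  have hb1ge : (1:ℝ) ≤ (b (m + 1) : ℝ) := by
    have : 1 ≤ b (m + 1) := Nat.one_le_iff_ne_zero.mpr hmne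
    exact_mod_cast this
  have hb2le : (b (m + 2) : ℝ) ≤ (aCF (m + 2) : ℝ) - 1 := by
    have hle := hble (m + 2) (by omega)
    have hne : (b (m + 2) : ℤ) ≠ aCF (m + 2) := fun h' => hmne (hbcons (m + 1) (by omega) h')
    have : (b (m + 2) : ℤ) ≤ aCF (m + 2) - 1 := by omega
    exact_mod_cast this
  have hrec := hβrec m
  have hfmeq : f m = (b (m + 1) : ℝ) * β m := rfl
  have hfm1eq : f (m + 1) = (b (m + 2) : ℝ) * β (m + 1) := rfl
  -- eliminate impossible hc branches, get unified bounds
  have hcbound : (Even n ∧ -β n < c ∧ c < -β n - β (n + 1)) ∨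
      (Odd n ∧ -β n - β (n + 1) < c ∧ c < -β n) := by
    rcases Nat.even_or_odd n with h | h
    · left
      refine ⟨h, ?_⟩
      have hn1 : β (n + 1) < 0 := (hsign (n + 1)).2 h.add_one
      rcases hc with ⟨h1', h2'⟩ | ⟨h1', h2'⟩
      · exact ⟨h1', by linarith⟩
      · exfalso; linarith
    · right
      refine ⟨h, ?_⟩
      have hn1 : 0 < β (n + 1) := (hsign (n + 1)).1 h.add_one
      rcases hc with ⟨h1', h2'⟩ | ⟨h1', h2'⟩
      · exfalso; linarith
      · exact ⟨by linarith, h2'⟩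
  -- case on parity of m
  rcases Nat.even_or_odd m with hme | hmo
  · -- m even : c ≥ -β (m+1) > 0
    have hβm : 0 < β m := (hsign m).1 hme
    have hβm1 : β (m + 1) < 0 := (hsign (m + 1)).2 hme.add_one
    have htl : -β (m + 2) ≤ ∑' k, f (k + (m + 2)) :=
      (htail (m + 2)).1 (hme.add even_two)
    have hfm : β m ≤ f m := by
      rw [hfmeq]
      exact le_mul_of_one_le_left hβm.le hb1ge
    have hfm1 : β (m + 2) - β m - β (m + 1) ≤ f (m + 1) := by
      rw [hfm1eq]
      have hmul := mul_le_mul_of_nonpos_right hb2le hβm1.le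
      have e : ((aCF (m + 2) : ℝ) - 1) * β (m + 1)
          = β (m + 2) - β m - β (m + 1) := by rw [hrec]; ring
      linarith
    have hcge : -β (m + 1) ≤ c := by
      rw [hdecomp]
      linarith
    rcases hcbound with ⟨hne', h1', h2'⟩ | ⟨hno, h1', h2'⟩
    · -- n even : c < -β n - β(n+1) < 0 but c ≥ -β(m+1) > 0
      have hn1 : β (n + 1) < 0 := (hsign (n + 1)).2 hne'.add_one
      have hβn : 0 < β n := (hsign n).1 hne'
      have habs := hBlt n
      simp only [hBdef, abs_of_pos hβn, abs_of_neg hn1] at habs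
      linarith
    · -- n odd : m < n, so m+1 ≤ n, both odd, β (m+1) ≤ β n
      have hmn' : m < n := by
        rcases Nat.lt_or_ge m n with h | h
        · exact h
        · exfalso
          have : m = n := le_antisymm hmn h
          rw [this] at hme
          exact (Nat.not_odd_iff_even.mpr hme) hno
      have hle : B n ≤ B (m + 1) := hBanti (by omega)
      have hβn : β n < 0 := (hsign n).2 hno
      simp only [hBdef, abs_of_neg hβn, abs_of_neg hβm1] at hle
      linarith
  · -- m odd : c ≤ -β (m+1) < 0
    have hβm : β m < 0 := (hsign m).2 hmo
    have hβm1 : 0 < β (m + 1) := (hsign (m + 1)).1 hmo.add_one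
    have htl : ∑' k, f (k + (m + 2)) ≤ -β (m + 2) := by
      apply (htail (m + 2)).2
      rcases hmo with ⟨t, ht⟩
      exact ⟨t + 1, by omega⟩
    have hfm : f m ≤ β m := by
      rw [hfmeq]
      have hmul := mul_le_mul_of_nonpos_right hb1ge hβm.le
      linarith
    have hfm1 : f (m + 1) ≤ β (m + 2) - β m - β (m + 1) := by
      rw [hfm1eq]
      have hmul := mul_le_mul_of_nonneg_right hb2le hβm1.le
      have e : ((aCF (m + 2) : ℝ) - 1) * β (m + 1)
          = β (m + 2) - β m - β (m + 1) := by rw [hrec]; ring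
      linarith
    have hcle : c ≤ -β (m + 1) := by
      rw [hdecomp]
      linarith
    rcases hcbound with ⟨hne', h1', h2'⟩ | ⟨hno, h1', h2'⟩
    · -- n even : m < n, m+1 ≤ n, c > -β n ≥ -β (m+1)
      have hmn' : m < n := by
        rcases Nat.lt_or_ge m n with h | h
        · exact h
        · exfalso
          have : m = n := le_antisymm hmn h
          rw [this] at hmo
          exact (Nat.not_odd_iff_even.mpr hne') hmo
      have hle : B n ≤ B (m + 1) := hBanti (by omega)
      have hβn : 0 < β n := (hsign n).1 hne'
      simp only [hBdef, abs_of_pos hβn, abs_of_pos hβm1] at hle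
      linarith
    · -- n odd : c > -β n - β (n+1) > 0 but c < 0
      have hn1 : 0 < β (n + 1) := (hsign (n + 1)).1 hno.add_one
      have hβn : β n < 0 := (hsign n).2 hno
      have habs := hBlt n
      simp only [hBdef, abs_of_neg hβn, abs_of_pos hn1] at habs
      linarith
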